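/- G_{f₀} is chaotic in the sense of Devaney on (𝒳,d): it is topologically transitive, its periodic points are dense, and it has sensitive dependence on initial conditions. -/

import Mathlib

open scoped BigOperators
open MeasureTheory ProbabilityTheory

namespace CI

/-- Strategies: sequences with values in {1,…,N}, encoded as `Fin N`. -/
abbrev Strat (N : ℕ) := ℕ → Fin N
/-- States of the system: boolean vectors of length N. -/
abbrev CState (N : ℕ) := Fin N → Bool
/-- The phase space 𝒳 = {1,…,N}^ℕ × 𝔹^N. -/
abbrev Pt (N : ℕ) := Strat N × CState N

/-- d_e : sum of the discrete metric over the coordinates. -/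
noncomputable def de {N : ℕ} (E F : CState N) : ℝ :=
  ∑ k : Fin N, if E k = F k then (0 : ℝ) else 1

/-- d_s(S,Š) = (9/N) Σ_{k≥1} |S^k − Š^k| / 10^k  (indices shifted to start at 0). -/
noncomputable def ds (N : ℕ) (S T : Strat N) : ℝ :=
  (9 / N) * ∑' k : ℕ, |((S k : ℝ)) - ((T k : ℝ))| / 10 ^ (k + 1)

/-- The distance d = d_e + d_s on 𝒳. -/
noncomputable def dC {N : ℕ} (p q : Pt N) : ℝ := de p.2 q.2 + ds N p.1 q.1

/-- Flip bit k of the state E. -/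
def bflip {N : ℕ} (k : Fin N) (E : CState N) : CState N :=
  fun j => if j = k then !(E j) else E j

/-- F_f(k,E): equal to E except possibly in coordinate k, where it is f(E)_k. -/
def Ff {N : ℕ} (f : CState N → CState N) (k : Fin N) (E : CState N) : CState N :=
  fun j => if j = k then f E k else E j

/-- The chaotic-iterations map G_f(S,E) = (σ(S), F_f(S^0,E)). -/
def Gf {N : ℕ} (f : CState N → CState N) (p : Pt N) : Pt N :=
  (fun n => p.1 (n + 1), Ff f (p.1 0) p.2)

/-- The vectorial negation f₀. -/
def f0 {N : ℕ} (E : CState N) : CState N := fun j => !(E j)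

/-- G_{f₀}. -/
def G0 {N : ℕ} : Pt N → Pt N := Gf f0

/-- Open ball for the distance dC. -/
def ballC {N : ℕ} (x : Pt N) (r : ℝ) : Set (Pt N) := {y | dC x y < r}

/-- Open sets of the metric space (𝒳,d). -/
def IsOpenC {N : ℕ} (U : Set (Pt N)) : Prop := ∀ x ∈ U, ∃ ε > 0, ballC x ε ⊆ U

/-- Iterating the flip-one-coordinate dynamics along a strategy. -/
def runCI {N : ℕ} (S : ℕ → Fin N) (E : CState N) : ℕ → CState N
  | 0 => E
  | n + 1 => bflip (S n) (runCI S E n)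

/-- The CIDS (cover-dependent) strategy: S^k = k if k ≤ N and X_k = 1, else S^k = 1
(indices encoded from 0, so "1" is `0 : Fin N`). -/
def cids {N : ℕ} [NeZero N] (X : CState N) : ℕ → Fin N :=
  fun k => if h : k < N then (if X ⟨k, h⟩ then ⟨k, h⟩ else 0) else 0


section Aux

variable {N : ℕ}

lemma bflip_bflip (a : Fin N) (E : CState N) : bflip a (bflip a E) = E := by
  funext j; simp only [bflip]; split_ifs <;> simp

lemma bflip_comm (a b : Fin N) (E : CState N) :
    bflip a (bflip b E) = bflip b (bflip a E) := by
  by_cases hab : a = b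
  · rw [hab]
  · funext j
    have hba : ¬ b = a := fun h => hab h.symm
    by_cases h1 : j = a <;> by_cases h2 : j = b <;> simp_all [bflip]

lemma runCI_bflip (S : Strat N) (a : Fin N) (E : CState N) (n : ℕ) :
    runCI S (bflip a E) n = bflip a (runCI S E n) := by
  induction n with
  | zero => rfl
  | succ n ih => show bflip (S n) (runCI S (bflip a E) n) = _
                 rw [ih, bflip_comm]; rfl

lemma runCI_inv (S : Strat N) (E : CState N) (n : ℕ) :
    runCI S (runCI S E n) n = E := by
  induction n generalizing E with
  | zero => rfl
  | succ n ih =>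
      show bflip (S n) (runCI S (bflip (S n) (runCI S E n)) n) = E
      rw [runCI_bflip, bflip_bflip]; exact ih E

lemma runCI_congr {S T : Strat N} {E : CState N} {n : ℕ} (h : ∀ k < n, S k = T k) :
    runCI S E n = runCI T E n := by
  induction n with
  | zero => rfl
  | succ n ih =>
      show bflip (S n) (runCI S E n) = bflip (T n) (runCI T E n)
      rw [h n (by omega), ih (fun k hk => h k (by omega))]

lemma runCI_add (S : Strat N) (E : CState N) (m n : ℕ) :
    runCI S E (m + n) = runCI (fun k => S (m + k)) (runCI S E m) n := by
  induction n with
  | zero => rfl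
  | succ n ih =>
      show runCI S E ((m + n) + 1) = bflip (S (m + n)) _
      show bflip (S (m + n)) (runCI S E (m + n)) = _
      rw [ih]

lemma Ff_f0 (k : Fin N) (E : CState N) : Ff f0 k E = bflip k E := by
  funext j; unfold Ff f0 bflip; split_ifs with h
  · rw [h]
  · rfl

lemma G0_iter (S : Strat N) (E : CState N) (n : ℕ) :
    G0^[n] (S, E) = (fun k => S (k + n), runCI S E n) := by
  induction n with
  | zero => simp [runCI]
  | succ n ih =>
      rw [Function.iterate_succ_apply', ih]
      refine Prod.ext ?_ ?_
      · funext k; show S (k + 1 + n) = S (k + (n + 1)); congr 1; omega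
      · show Ff f0 (S (0 + n)) (runCI S E n) = runCI S E (n + 1)
        rw [Nat.zero_add, Ff_f0]; rfl

/-- Apply a list of flips in order. -/
def flipList (L : List (Fin N)) (C : CState N) : CState N :=
  L.foldl (fun E a => bflip a E) C

lemma runCI_succ' (S : Strat N) (C : CState N) (n : ℕ) :
    runCI S C (n + 1) = runCI (fun k => S (k + 1)) (bflip (S 0) C) n := by
  have h := runCI_add S C 1 n
  rw [Nat.add_comm 1 n] at h
  rw [h]
  show runCI _ (bflip (S 0) C) n = _
  exact runCI_congr (fun k _ => by rw [Nat.add_comm])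

lemma runCI_list (L : List (Fin N)) (C : CState N) (S : Strat N)
    (h : ∀ (k : ℕ) (hk : k < L.length), S k = L.get ⟨k, hk⟩) :
    runCI S C L.length = flipList L C := by
  induction L generalizing C S with
  | nil => rfl
  | cons a L ih =>
      show runCI S C (L.length + 1) = _
      rw [runCI_succ']
      have h0 : S 0 = a := h 0 (by simp)
      rw [h0]
      exact ih (bflip a C) (fun k => S (k + 1)) (fun k hk => h (k + 1) (by simpa using Nat.succ_lt_succ hk))

lemma flipList_apply (L : List (Fin N)) (hL : L.Nodup) (C : CState N) (j : Fin N) :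
    flipList L C j = if j ∈ L then !(C j) else C j := by
  induction L generalizing C with
  | nil => simp [flipList]
  | cons a L ih =>
      obtain ⟨ha, hL'⟩ := List.nodup_cons.mp hL
      show flipList L (bflip a C) j = _
      rw [ih hL' (bflip a C)]
      by_cases hja : j = a
      · subst hja
        rw [if_neg (fun h => ha h), if_pos (by simp)]
        simp [bflip]
      · have : bflip a C j = C j := by simp [bflip, hja]
        rw [this]
        by_cases hjL : j ∈ L
        · rw [if_pos hjL, if_pos (by simp [hjL])]
        · rw [if_neg hjL, if_neg (by simp [hja, hjL])]

lemma flip_fix (C F : CState N) :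
    flipList ((List.finRange N).filter (fun j => C j != F j)) C = F := by
  funext j
  rw [flipList_apply _ ((List.nodup_finRange N).filter _) C j]
  by_cases h : C j = F j
  · rw [if_neg, h]
    intro hmem
    rw [List.mem_filter] at hmem
    simp [h] at hmem
  · rw [if_pos]
    · cases hC : C j <;> cases hF : F j <;> simp_all
    · rw [List.mem_filter]
      exact ⟨List.mem_finRange j, by simp [h]⟩

end Aux
section Aux2

variable {N : ℕ}

lemma de_self (E : CState N) : de E E = 0 := by simp [de]

lemma de_nonneg (E F : CState N) : 0 ≤ de E F :=
  Finset.sum_nonneg (fun k _ => by split <;> norm_num)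

lemma summand_le (S T : Strat N) (k : ℕ) :
    |((S k : ℝ)) - (T k : ℝ)| / 10 ^ (k + 1) ≤ (N : ℝ) * (1/10) ^ (k + 1) := by
  have habs : |((S k : ℝ)) - (T k : ℝ)| ≤ N := by
    have h1 : ((S k : ℝ)) < N := by exact_mod_cast (S k).isLt
    have h2 : ((T k : ℝ)) < N := by exact_mod_cast (T k).isLt
    have h3 : (0:ℝ) ≤ (S k : ℝ) := by positivity
    have h4 : (0:ℝ) ≤ (T k : ℝ) := by positivity
    rw [abs_sub_le_iff]; constructor <;> linarith
  calc |((S k : ℝ)) - (T k : ℝ)| / 10 ^ (k + 1) ≤ (N:ℝ) / 10 ^ (k + 1) := by gcongr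
    _ = (N:ℝ) * (1/10) ^ (k + 1) := by rw [div_pow, one_pow]; ring

lemma summable_bound : Summable (fun k : ℕ => (N : ℝ) * (1/10) ^ (k + 1)) := by
  have : Summable (fun k : ℕ => (1/10 : ℝ) ^ k) :=
    summable_geometric_of_lt_one (by norm_num) (by norm_num)
  simpa [pow_succ, mul_comm, mul_assoc, mul_left_comm] using (this.mul_left ((N:ℝ) * (1/10)))

lemma summable_ds (S T : Strat N) :
    Summable (fun k : ℕ => |((S k : ℝ)) - (T k : ℝ)| / 10 ^ (k + 1)) :=
  Summable.of_nonneg_of_le (fun k => by positivity) (summand_le S T) summable_bound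

lemma ds_nonneg (S T : Strat N) : 0 ≤ ds N S T :=
  mul_nonneg (by positivity) (tsum_nonneg (fun k => by positivity))

lemma ds_le (hN : 0 < N) (S T : Strat N) (M : ℕ) (h : ∀ k < M, S k = T k) :
    ds N S T ≤ (1/10) ^ M := by
  have hN' : (0:ℝ) < N := by exact_mod_cast hN
  set a : ℕ → ℝ := fun k => |((S k : ℝ)) - (T k : ℝ)| / 10 ^ (k + 1) with ha
  set b : ℕ → ℝ := fun k => if k < M then 0 else (N:ℝ) * (1/10) ^ (k + 1) with hb
  have hb_sum : Summable b := by
    apply Summable.of_nonneg_of_le _ _ (summable_bound (N := N))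
    · intro k; rw [hb]; dsimp only; split <;> positivity
    · intro k; rw [hb]; dsimp only; split
      · positivity
      · exact le_rfl
  have hab : ∀ k, a k ≤ b k := by
    intro k; rw [ha, hb]; dsimp only; split
    · rename_i hk
      rw [h k hk, sub_self, abs_zero, zero_div]
    · exact summand_le S T k
  have h1 : ∑' k, a k ≤ ∑' k, b k := Summable.tsum_le_tsum hab (summable_ds S T) hb_sum
  have h2 : ∑' k, b k = (N:ℝ) * ((1/10) ^ (M + 1) * (1 - 1/10)⁻¹) := by
    rw [← Summable.sum_add_tsum_nat_add M hb_sum]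
    have hz : ∑ i ∈ Finset.range M, b i = 0 :=
      Finset.sum_eq_zero (fun i hi => if_pos (Finset.mem_range.mp hi))
    rw [hz, zero_add]
    have hc : ∀ k : ℕ, b (k + M) = ((N:ℝ) * (1/10) ^ (M + 1)) * (1/10) ^ k := by
      intro k; rw [hb]; dsimp only
      rw [if_neg (by omega)]
      have he : k + M + 1 = (M + 1) + k := by omega
      rw [he, pow_add]; ring
    rw [tsum_congr hc, tsum_mul_left,
      tsum_geometric_of_lt_one (by norm_num) (by norm_num)]
    ring
  have h3 : ds N S T = (9 / N) * ∑' k, a k := rfl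
  rw [h3]
  have h4 : (9 / (N:ℝ)) * ∑' k, a k ≤ (9 / N) * ((N:ℝ) * ((1/10) ^ (M + 1) * (1 - 1/10)⁻¹)) := by
    rw [← h2]
    exact mul_le_mul_of_nonneg_left h1 (by positivity)
  refine h4.trans (le_of_eq ?_)
  have h5 : ((1:ℝ) - 1/10)⁻¹ = 10/9 := by norm_num
  rw [h5, pow_succ]
  field_simp

end Aux2
section Aux3

variable {N : ℕ}

lemma de_flip_ge {a b : Fin N} (hab : a ≠ b) (C : CState N) :
    2 ≤ de (bflip a C) (bflip b C) := by
  have hba : b ≠ a := fun h => hab h.symm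
  have key : ∀ k ∈ ({a, b} : Finset (Fin N)),
      (if bflip a C k = bflip b C k then (0:ℝ) else 1) = 1 := by
    intro k hk
    rcases Finset.mem_insert.mp hk with rfl | hk
    · rw [if_neg]
      simp only [bflip, if_pos rfl, if_neg hab]
      cases C k <;> simp
    · rw [Finset.mem_singleton] at hk; subst hk
      rw [if_neg]
      simp only [bflip, if_pos rfl, if_neg hba]
      cases C k <;> simp
  have hsum : ∑ k ∈ ({a, b} : Finset (Fin N)),
      (if bflip a C k = bflip b C k then (0:ℝ) else 1) = 2 := by
    rw [Finset.sum_congr rfl key, Finset.sum_const, Finset.card_pair hab]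
    norm_num
  rw [de, ← hsum]
  exact Finset.sum_le_sum_of_subset_of_nonneg (Finset.subset_univ _)
    (fun k _ _ => by split <;> norm_num)

end Aux3


theorem stmt14 {N : ℕ} (hN : 2 ≤ N) :
    (∀ U V : Set (Pt N), IsOpenC U → IsOpenC V → U.Nonempty → V.Nonempty →
      ∃ k : ℕ, ((G0^[k] '' U) ∩ V).Nonempty) ∧
    (∀ x : Pt N, ∀ ε > (0 : ℝ), ∃ y : Pt N,
      (∃ p : ℕ, 1 ≤ p ∧ G0^[p] y = y) ∧ dC x y < ε) ∧
    (∃ δ > (0 : ℝ), ∀ x : Pt N, ∀ ε > (0 : ℝ), ∃ y : Pt N, dC x y < ε ∧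
      ∃ n : ℕ, δ < dC (G0^[n] x) (G0^[n] y)) := by
  have hN0 : 0 < N := by omega
  refine ⟨?_, ?_, ?_⟩
  · -- transitivity
    rintro U V hU hV ⟨x, hxU⟩ ⟨y, hyV⟩
    obtain ⟨ε, hε, hball⟩ := hU x hxU
    obtain ⟨M, hM⟩ := exists_pow_lt_of_lt_one hε (show (1/10:ℝ) < 1 by norm_num)
    obtain ⟨S, E⟩ := x
    obtain ⟨T, F⟩ := y
    set C : CState N := runCI S E M with hC
    set L : List (Fin N) := (List.finRange N).filter (fun j => C j != F j) with hLdef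
    set R : Strat N := fun k => if k < M then S k
        else if h2 : k - M < L.length then L.get ⟨k - M, h2⟩
        else T (k - (M + L.length)) with hR
    have hRS : ∀ k < M, S k = R k := by
      intro k hk; rw [hR]; dsimp only; rw [if_pos hk]
    have hzU : (R, E) ∈ U := by
      apply hball
      show de E E + ds N S R < ε
      rw [de_self, zero_add]
      exact lt_of_le_of_lt (ds_le hN0 S R M hRS) hM
    refine ⟨M + L.length, (T, F), ⟨(R, E), hzU, ?_⟩, hyV⟩
    rw [G0_iter]
    refine Prod.ext ?_ ?_
    · funext k
      show R (k + (M + L.length)) = T k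
      rw [hR]; dsimp only
      rw [if_neg (by omega), dif_neg (by omega)]
      congr 1; omega
    · show runCI R E (M + L.length) = F
      rw [runCI_add]
      have hREM : runCI R E M = C := by
        rw [hC]; exact runCI_congr (fun k hk => (hRS k hk).symm)
      rw [hREM]
      rw [runCI_list L C _ ?_]
      · exact flip_fix C F
      · intro k hk
        show R (M + k) = _
        rw [hR]; dsimp only
        rw [if_neg (by omega), dif_pos (by omega : M + k - M < L.length)]
        congr 1
        simp only [Fin.mk.injEq]
        omega
  · -- dense periodic points
    rintro ⟨S, E⟩ ε hε
    obtain ⟨M0, hM0⟩ := exists_pow_lt_of_lt_one hε (show (1/10:ℝ) < 1 by norm_num)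
    set M : ℕ := max M0 1 with hMdef
    have hM1 : 1 ≤ M := le_max_right _ _
    set T : Strat N := fun k => S (k % M) with hT
    refine ⟨(T, E), ⟨2 * M, by omega, ?_⟩, ?_⟩
    · rw [G0_iter]
      refine Prod.ext ?_ ?_
      · funext k
        show S ((k + 2 * M) % M) = S (k % M)
        congr 1
        exact Nat.add_mul_mod_self_right k 2 M
      · show runCI T E (2 * M) = E
        have h2 : 2 * M = M + M := by omega
        rw [h2, runCI_add]
        have hTT : (fun k => T (M + k)) = T := by
          funext k
          show S ((M + k) % M) = S (k % M)
          congr 1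
          exact Nat.add_mod_left M k
        rw [hTT, runCI_inv]
    · show de E E + ds N S T < ε
      rw [de_self, zero_add]
      have h1 : ds N S T ≤ (1/10) ^ M := by
        apply ds_le hN0 S T M
        intro k hk
        show S k = S (k % M)
        rw [Nat.mod_eq_of_lt hk]
      have h2 : ((1:ℝ)/10) ^ M ≤ (1/10) ^ M0 :=
        pow_le_pow_of_le_one (by norm_num) (by norm_num) (le_max_left _ _)
      linarith
  · -- sensitivity
    refine ⟨1, by norm_num, ?_⟩
    rintro ⟨S, E⟩ ε hε
    obtain ⟨M, hM⟩ := exists_pow_lt_of_lt_one hε (show (1/10:ℝ) < 1 by norm_num)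
    set a0 : Fin N := ⟨0, by omega⟩ with ha0
    set a1 : Fin N := ⟨1, by omega⟩ with ha1
    set t : Fin N := if S M = a0 then a1 else a0 with ht
    have ha01 : a0 ≠ a1 := by
      rw [ha0, ha1]
      intro hc
      rw [Fin.mk.injEq] at hc
      omega
    have hts : S M ≠ t := by
      rw [ht]
      by_cases h : S M = a0
      · rw [if_pos h, h]; exact ha01
      · rw [if_neg h]; exact h
    set T : Strat N := fun k => if k = M then t else S k with hTdef
    refine ⟨(T, E), ?_, M + 1, ?_⟩
    · show de E E + ds N S T < ε
      rw [de_self, zero_add]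
      refine lt_of_le_of_lt (ds_le hN0 S T M ?_) hM
      intro k hk
      rw [hTdef]; dsimp only
      rw [if_neg (by omega)]
    · rw [G0_iter, G0_iter]
      have hC : runCI T E M = runCI S E M :=
        runCI_congr (fun k hk => by rw [hTdef]; dsimp only; rw [if_neg (by omega)])
      have hS1 : runCI S E (M + 1) = bflip (S M) (runCI S E M) := rfl
      have hT1 : runCI T E (M + 1) = bflip t (runCI S E M) := by
        show bflip (T M) (runCI T E M) = _
        rw [hC]
        rw [hTdef]; dsimp only; rw [if_pos rfl]
      have h2 : 2 ≤ de (runCI S E (M + 1)) (runCI T E (M + 1)) := by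
        rw [hS1, hT1]
        exact de_flip_ge hts (runCI S E M)
      have h3 := ds_nonneg (N := N) (fun k => S (k + (M + 1))) (fun k => T (k + (M + 1)))
      show (1:ℝ) < de (runCI S E (M + 1)) (runCI T E (M + 1)) + ds N _ _
      linarith


end CI
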